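/- There is an explicit injection Φ from the set of 132-avoiding permutations of S_n with a marked inversion pair into S_{n+1}, such that the image of Φ is exactly the set of σ ∈ S_{n+1} with pmp_{\underline{1}32}(σ) = 1; hence Φ is a bijection between these two sets. -/
import Mathlib


/-- Number of positions that start an occurrence of 132 in `σ` (pmp of `\underline{1}32`). -/
noncomputable def pmpS132 {n : ℕ} (σ : Equiv.Perm (Fin n)) : ℕ :=
  Nat.card {t : Fin n // ∃ u v : Fin n, t < u ∧ u < v ∧ σ t < σ v ∧ σ v < σ u}

/-- `σ` avoids the pattern 132. -/
def Avoids132 {n : ℕ} (σ : Equiv.Perm (Fin n)) : Prop :=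
  ¬ ∃ i j k : Fin n, i < j ∧ j < k ∧ σ i < σ k ∧ σ k < σ j

/-- The value (as a natural number) at position `p` of the permutation of `S_{n+1}`
obtained from `σ ∈ S_n` by incrementing every value `≥ i` by one and inserting the
value `i` at position `j`. -/
def insVal {n : ℕ} (σ : Equiv.Perm (Fin n)) (j : Fin n) (i : ℕ) (p : Fin (n + 1)) : ℕ :=
  if hp : (p : ℕ) < (j : ℕ) then
    (if (σ ⟨p, hp.trans j.isLt⟩ : ℕ) < i then (σ ⟨p, hp.trans j.isLt⟩ : ℕ)
     else (σ ⟨p, hp.trans j.isLt⟩ : ℕ) + 1)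
  else if hpe : (p : ℕ) = (j : ℕ) then i
  else
    (if (σ ⟨(p : ℕ) - 1, by have := p.isLt; have := j.isLt; omega⟩ : ℕ) < i then
       (σ ⟨(p : ℕ) - 1, by have := p.isLt; have := j.isLt; omega⟩ : ℕ)
     else (σ ⟨(p : ℕ) - 1, by have := p.isLt; have := j.isLt; omega⟩ : ℕ) + 1)

/-- 132-avoiding permutations of `S_n` with a marked inversion pair `a < b`,
`σ a > σ b`: the set `IMS_n(132)`. -/
def IMS132 (n : ℕ) : Type :=
  {x : Equiv.Perm (Fin n) × Fin n × Fin n //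
    Avoids132 x.1 ∧ x.2.1 < x.2.2 ∧ x.1 x.2.2 < x.1 x.2.1}

namespace Stmt18Aux

variable {n : ℕ}

/-- Insertion of value `i` at position `j` into `σ`. -/
def ins (σ : Equiv.Perm (Fin n)) (j i : Fin (n+1)) : Equiv.Perm (Fin (n+1)) :=
  (finSuccEquiv' j).trans ((Equiv.optionCongr σ).trans (finSuccEquiv' i).symm)

lemma ins_self (σ : Equiv.Perm (Fin n)) (j i : Fin (n+1)) : ins σ j i j = i := by
  simp [ins, finSuccEquiv'_at, finSuccEquiv'_symm_none]

lemma ins_succAbove (σ : Equiv.Perm (Fin n)) (j i : Fin (n+1)) (k : Fin n) :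
    ins σ j i (j.succAbove k) = i.succAbove (σ k) := by
  simp [ins, finSuccEquiv'_succAbove, finSuccEquiv'_symm_some]

lemma val_succAbove (p : Fin (n+1)) (k : Fin n) :
    ((p.succAbove k : Fin (n+1)) : ℕ) = if (k:ℕ) < (p:ℕ) then (k:ℕ) else (k:ℕ)+1 := by
  rw [Fin.succAbove]
  split_ifs with h1 h2 h2 <;> simp_all [Fin.lt_def]

lemma sa_lt_sa (p : Fin (n+1)) (k l : Fin n) :
    ((p.succAbove k : Fin (n+1)) : ℕ) < (p.succAbove l : Fin (n+1)) ↔ (k:ℕ) < (l:ℕ) := by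
  rw [val_succAbove, val_succAbove]; split_ifs <;> omega

lemma sa_lt_self (p : Fin (n+1)) (k : Fin n) :
    ((p.succAbove k : Fin (n+1)) : ℕ) < (p : ℕ) ↔ (k:ℕ) < (p:ℕ) := by
  rw [val_succAbove]; split_ifs <;> omega

lemma self_lt_sa (p : Fin (n+1)) (k : Fin n) :
    (p : ℕ) < ((p.succAbove k : Fin (n+1)) : ℕ) ↔ (p:ℕ) ≤ (k:ℕ) := by
  rw [val_succAbove]; split_ifs <;> omega

lemma sa_inj (p : Fin (n+1)) (k l : Fin n) (h : p.succAbove k = p.succAbove l) : k = l := by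
  have h' := congrArg Fin.val h
  rw [val_succAbove, val_succAbove] at h'
  apply Fin.ext
  split_ifs at h' <;> omega

/-- `t` starts an occurrence of the pattern 132 in `τ`. -/
def Occ {m : ℕ} (τ : Equiv.Perm (Fin m)) (t : Fin m) : Prop :=
  ∃ u v : Fin m, t < u ∧ u < v ∧ τ t < τ v ∧ τ v < τ u

lemma pmp_eq_one_iff {m : ℕ} (τ : Equiv.Perm (Fin m)) :
    pmpS132 τ = 1 ↔ ∃ t0, Occ τ t0 ∧ ∀ t, Occ τ t → t = t0 := by
  rw [pmpS132, Nat.card_eq_one_iff_unique]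
  constructor
  · rintro ⟨hs, ⟨⟨t0, h0⟩⟩⟩
    exact ⟨t0, h0, fun t ht => congrArg Subtype.val (hs.allEq ⟨t, ht⟩ ⟨t0, h0⟩)⟩
  · rintro ⟨t0, h0, huniq⟩
    exact ⟨⟨fun x y => Subtype.ext ((huniq _ x.2).trans (huniq _ y.2).symm)⟩, ⟨⟨t0, h0⟩⟩⟩

section Forward

variable (σ : Equiv.Perm (Fin n)) (a b : Fin n)

lemma forward_occ (hab : a < b) (hinv : σ b < σ a) :
    Occ (ins σ a.castSucc ((σ b).castSucc)) a.castSucc := by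
  refine ⟨a.castSucc.succAbove a, a.castSucc.succAbove b, ?_, ?_, ?_, ?_⟩
  · rw [Fin.lt_def, self_lt_sa]; simp
  · rw [Fin.lt_def, sa_lt_sa]; exact hab
  · rw [ins_self, ins_succAbove, Fin.lt_def, self_lt_sa]; simp
  · rw [ins_succAbove, ins_succAbove, Fin.lt_def, sa_lt_sa]; exact hinv

lemma forward_uniq (hav : Avoids132 σ) (hab : a < b) (hinv : σ b < σ a) :
    ∀ t, Occ (ins σ a.castSucc ((σ b).castSucc)) t → t = a.castSucc := by
  intro t ⟨u, v, htu, huv, h1, h2⟩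
  by_contra ht
  obtain ⟨kt, rfl⟩ := Fin.exists_succAbove_eq ht
  by_cases hu : u = a.castSucc
  · subst hu
    have hv : v ≠ a.castSucc := (ne_of_gt huv)
    obtain ⟨kv, rfl⟩ := Fin.exists_succAbove_eq hv
    simp only [ins_self, ins_succAbove] at h1 h2
    rw [Fin.lt_def, sa_lt_self, Fin.coe_castSucc] at h2
    rw [Fin.lt_def, sa_lt_sa] at h1
    rw [Fin.lt_def, sa_lt_self, Fin.coe_castSucc] at htu
    exact hav ⟨kt, a, b, Fin.lt_def.mpr htu, hab,
      Fin.lt_def.mpr (lt_trans h1 h2), hinv⟩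
  · obtain ⟨ku, rfl⟩ := Fin.exists_succAbove_eq hu
    by_cases hv : v = a.castSucc
    · subst hv
      simp only [ins_self, ins_succAbove] at h1 h2
      rw [Fin.lt_def, sa_lt_self, Fin.coe_castSucc] at h1
      rw [Fin.lt_def, self_lt_sa, Fin.coe_castSucc] at h2
      rw [Fin.lt_def, sa_lt_sa] at htu
      rw [Fin.lt_def, sa_lt_self, Fin.coe_castSucc] at huv
      have habv : (a : ℕ) < (b : ℕ) := Fin.lt_def.mp hab
      have hkub : ku ≠ b := by
        intro h; subst h; omega
      have h2' : (σ b : ℕ) < (σ ku : ℕ) := by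
        rcases lt_or_eq_of_le h2 with h | h
        · exact h
        · exact absurd (σ.injective (Fin.ext h)) (Ne.symm hkub)
      exact hav ⟨kt, ku, b, Fin.lt_def.mpr htu,
        Fin.lt_def.mpr (by omega), Fin.lt_def.mpr h1, Fin.lt_def.mpr h2'⟩
    · obtain ⟨kv, rfl⟩ := Fin.exists_succAbove_eq hv
      simp only [ins_succAbove] at h1 h2
      rw [Fin.lt_def, sa_lt_sa] at h1 h2 htu huv
      exact hav ⟨kt, ku, kv, Fin.lt_def.mpr htu, Fin.lt_def.mpr huv,
        Fin.lt_def.mpr h1, Fin.lt_def.mpr h2⟩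

end Forward

/-- values of ins agree with insVal -/
lemma val_ins (σ : Equiv.Perm (Fin n)) (a b : Fin n) (p : Fin (n+1)) :
    ((ins σ a.castSucc ((σ b).castSucc)) p : ℕ) = insVal σ a (σ b : ℕ) p := by
  by_cases hp : p = a.castSucc
  · subst hp
    rw [ins_self, insVal]
    rw [dif_neg (by simp), dif_pos (by simp)]
    simp
  · obtain ⟨k, rfl⟩ := Fin.exists_succAbove_eq hp
    rw [ins_succAbove, val_succAbove]
    have hka := k.isLt
    by_cases hk : (k : ℕ) < (a : ℕ)
    · have hval : ((a.castSucc.succAbove k : Fin (n+1)) : ℕ) = (k : ℕ) := by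
        rw [val_succAbove]; simp [hk]
      have hva : ((a.castSucc.succAbove k : Fin (n+1)) : ℕ) < (a : ℕ) := by rw [hval]; exact hk
      rw [insVal, dif_pos hva]
      have hfin : (⟨((a.castSucc.succAbove k : Fin (n+1)) : ℕ), hva.trans a.isLt⟩ : Fin n) = k :=
        Fin.ext hval
      rw [hfin]
      simp
    · have hval : ((a.castSucc.succAbove k : Fin (n+1)) : ℕ) = (k : ℕ) + 1 := by
        rw [val_succAbove]; simp [hk]
      rw [insVal, dif_neg (by rw [hval]; omega), dif_neg (by rw [hval]; omega)]
      have hfin : (⟨((a.castSucc.succAbove k : Fin (n+1)) : ℕ) - 1,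
          by have := (a.castSucc.succAbove k).isLt; have := a.isLt; omega⟩ : Fin n) = k :=
        Fin.ext (by simp [hval])
      rw [hfin]
      simp

section Reverse

variable (τ : Equiv.Perm (Fin (n+1)))

lemma reverse (j' : Fin (n+1)) (hocc : Occ τ j') (huniq : ∀ t, Occ τ t → t = j') :
    ∃ x : IMS132 n, ins x.1.1 x.1.2.1.castSucc ((x.1.1 x.1.2.2).castSucc) = τ := by
  obtain ⟨u0, v0, hju, huv, hA, hB⟩ := hocc
  rw [Fin.lt_def] at hju huv hA hB
  have hv0 := v0.isLt
  have hτu0 := (τ u0).isLt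
  have hjn : (j' : ℕ) < n := by omega
  have hin : ((τ j' : Fin (n+1)) : ℕ) < n := by omega
  set a : Fin n := ⟨(j' : ℕ), hjn⟩ with ha
  have haj : a.castSucc = j' := Fin.ext rfl
  set i' : Fin (n+1) := τ j' with hi'
  set e : Option (Fin n) ≃ Option (Fin n) :=
    ((finSuccEquiv' j').symm.trans (τ.trans (finSuccEquiv' i'))) with he
  have he_none : e none = none := by
    simp [he, finSuccEquiv'_symm_none, hi', finSuccEquiv'_at]
  set σ : Equiv.Perm (Fin n) := Equiv.removeNone e with hσ
  have hkey : ∀ k : Fin n, τ (j'.succAbove k) = i'.succAbove (σ k) := by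
    intro k
    have h1 : e (some k) = finSuccEquiv' i' (τ (j'.succAbove k)) := by
      simp [he, finSuccEquiv'_symm_some]
    have h2 : e (some k) ≠ none := by
      rw [← he_none]; exact fun h => (by simpa using e.injective h)
    obtain ⟨y, hy⟩ := Option.ne_none_iff_exists'.mp h2
    have h3 : some (σ k) = e (some k) := Equiv.removeNone_some e ⟨y, hy⟩
    have h4 : finSuccEquiv' i' (τ (j'.succAbove k)) = some (σ k) := by rw [← h1]; exact h3.symm
    have := congrArg (finSuccEquiv' i').symm h4
    rwa [Equiv.symm_apply_apply, finSuccEquiv'_symm_some] at this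
  have hav : Avoids132 σ := by
    rintro ⟨t', u', v', h1, h2, h3, h4⟩
    have : Occ τ (j'.succAbove t') := by
      refine ⟨j'.succAbove u', j'.succAbove v', ?_, ?_, ?_, ?_⟩
      · rw [Fin.lt_def, sa_lt_sa]; exact h1
      · rw [Fin.lt_def, sa_lt_sa]; exact h2
      · rw [hkey, hkey, Fin.lt_def, sa_lt_sa]; exact Fin.lt_def.mp h3
      · rw [hkey, hkey, Fin.lt_def, sa_lt_sa]; exact Fin.lt_def.mp h4
    exact Fin.succAbove_ne j' t' (huniq _ this)
  -- the position just after j'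
  have hu1lt : (j' : ℕ) + 1 < n + 1 := by omega
  set u1 : Fin (n+1) := ⟨(j':ℕ)+1, hu1lt⟩ with hu1
  have hu1val : (u1 : ℕ) = (j' : ℕ) + 1 := rfl
  have hu1j : u1 ≠ j' := by rw [Fin.ne_iff_vne]; omega
  have hne1 : (τ u1 : ℕ) ≠ (i' : ℕ) := fun h => hu1j (τ.injective (Fin.ext h))
  have hnlt : ¬ ((τ u1 : ℕ) < (i' : ℕ)) := by
    intro h
    have hu0u1 : (u1 : ℕ) ≤ (u0 : ℕ) := by omega
    have hocc1 : Occ τ u1 := by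
      rcases eq_or_lt_of_le hu0u1 with heq | hlt
      · exfalso
        have huu : u1 = u0 := Fin.ext heq
        rw [← huu] at hB
        omega
      · exact ⟨u0, v0, Fin.lt_def.mpr hlt, Fin.lt_def.mpr huv,
          Fin.lt_def.mpr (by omega), Fin.lt_def.mpr hB⟩
    have := congrArg Fin.val (huniq _ hocc1)
    omega
  have hne2 : (τ u1 : ℕ) ≠ (i' : ℕ) + 1 := by
    intro h
    have hv0ne : v0 ≠ u1 := by rw [Fin.ne_iff_vne]; omega
    have hτv0ne : (τ v0 : ℕ) ≠ (i' : ℕ) + 1 :=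
      fun hc => hv0ne (τ.injective (Fin.ext (hc.trans h.symm)))
    have hu0u1 : (u1 : ℕ) ≤ (u0 : ℕ) := by omega
    have hocc1 : Occ τ u1 := by
      rcases eq_or_lt_of_le hu0u1 with heq | hlt
      · exfalso
        have huu : u1 = u0 := Fin.ext heq
        rw [← huu] at hB
        omega
      · exact ⟨u0, v0, Fin.lt_def.mpr hlt, Fin.lt_def.mpr huv,
          Fin.lt_def.mpr (by omega), Fin.lt_def.mpr hB⟩
    have := congrArg Fin.val (huniq _ hocc1)
    omega
  have hτu1 : (i' : ℕ) + 1 < (τ u1 : ℕ) := by omega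
  -- the position w of the value i'+1
  set w : Fin (n+1) := τ.symm ⟨(i':ℕ)+1, by omega⟩ with hw
  have hτw : (τ w : ℕ) = (i':ℕ)+1 := by rw [hw, Equiv.apply_symm_apply]
  have hwj : w ≠ j' := by
    intro h; rw [h] at hτw; omega
  have hwu1 : w ≠ u1 := by
    intro h; rw [h] at hτw; omega
  have hwgt : (j' : ℕ) < (w : ℕ) := by
    by_contra hc
    push_neg at hc
    have hwjv : (w : ℕ) < (j' : ℕ) := lt_of_le_of_ne hc (fun h => hwj (Fin.ext h))
    have hv0w : v0 ≠ w := by rw [Fin.ne_iff_vne]; omega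
    have hτv0ne : (τ v0 : ℕ) ≠ (i' : ℕ) + 1 :=
      fun hc2 => hv0w (τ.injective (Fin.ext (by omega)))
    have hocc1 : Occ τ w :=
      ⟨u0, v0, Fin.lt_def.mpr (by omega), Fin.lt_def.mpr huv,
        Fin.lt_def.mpr (by omega), Fin.lt_def.mpr hB⟩
    have := congrArg Fin.val (huniq _ hocc1)
    omega
  have hwge2 : (j' : ℕ) + 2 ≤ (w : ℕ) := by
    rw [Fin.ne_iff_vne] at hwu1; omega
  have hwlt := w.isLt
  set b : Fin n := ⟨(w : ℕ) - 1, by omega⟩ with hb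
  have hbval : (b : ℕ) = (w : ℕ) - 1 := rfl
  have haval : (a : ℕ) = (j' : ℕ) := rfl
  have hab : a < b := Fin.lt_def.mpr (by omega)
  have hsab : j'.succAbove b = w := by
    apply Fin.ext
    rw [val_succAbove, if_neg (by omega)]
    omega
  have hsaa : j'.succAbove a = u1 := by
    apply Fin.ext
    rw [val_succAbove, if_neg (by omega)]
  have hσb : (σ b : ℕ) = (i' : ℕ) := by
    have h5 := congrArg Fin.val (hkey b)
    rw [hsab, hτw, val_succAbove] at h5
    split_ifs at h5 <;> omega
  have hσa : (i' : ℕ) + 1 ≤ (σ a : ℕ) := by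
    have h5 := congrArg Fin.val (hkey a)
    rw [hsaa, val_succAbove] at h5
    split_ifs at h5 <;> omega
  have hinv : σ b < σ a := Fin.lt_def.mpr (by omega)
  refine ⟨⟨(σ, a, b), hav, hab, hinv⟩, ?_⟩
  have hicast : (σ b).castSucc = i' := Fin.ext (by simp [hσb])
  show Stmt18Aux.ins σ a.castSucc ((σ b).castSucc) = τ
  rw [haj, hicast]
  apply Equiv.ext
  intro p
  by_cases hp : p = j'
  · subst hp; rw [ins_self, hi']
  · obtain ⟨k, rfl⟩ := Fin.exists_succAbove_eq hp
    rw [ins_succAbove, ← hkey]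

end Reverse

end Stmt18Aux

theorem stmt18 (n : ℕ) :
    ∃ Φ : IMS132 n → Equiv.Perm (Fin (n + 1)),
      (∀ (x : IMS132 n) (p : Fin (n + 1)),
        ((Φ x) p : ℕ) = insVal x.1.1 x.1.2.1 (x.1.1 x.1.2.2 : ℕ) p) ∧
      Function.Injective Φ ∧
      Set.range Φ = {σ : Equiv.Perm (Fin (n + 1)) | pmpS132 σ = 1} := by
  classical
  refine ⟨fun x => Stmt18Aux.ins x.1.1 x.1.2.1.castSucc ((x.1.1 x.1.2.2).castSucc), ?_, ?_, ?_⟩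
  · intro x p
    exact Stmt18Aux.val_ins x.1.1 x.1.2.1 x.1.2.2 p
  · intro x y hxy
    obtain ⟨⟨σx, ax, bx⟩, hx⟩ := x
    obtain ⟨⟨σy, ay, by₀⟩, hy⟩ := y
    simp only at hxy
    have hpt : ∀ p, Stmt18Aux.ins σx ax.castSucc ((σx bx).castSucc) p
        = Stmt18Aux.ins σy ay.castSucc ((σy by₀).castSucc) p := fun p => by rw [hxy]
    have ha : ax.castSucc = ay.castSucc := by
      refine Stmt18Aux.forward_uniq σy ay by₀ hy.1 hy.2.1 hy.2.2 _ ?_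
      rw [← hxy]
      exact Stmt18Aux.forward_occ σx ax bx hx.2.1 hx.2.2
    have ha' : ax = ay := Fin.castSucc_injective _ ha
    have hi : (σx bx).castSucc = (σy by₀).castSucc := by
      have h := hpt ax.castSucc
      rw [ha] at h
      rwa [Stmt18Aux.ins_self, Stmt18Aux.ins_self] at h
    have hσeq : σx = σy := by
      apply Equiv.ext
      intro k
      have h := hpt (ax.castSucc.succAbove k)
      rw [ha] at h
      rw [Stmt18Aux.ins_succAbove, Stmt18Aux.ins_succAbove, ← hi] at h
      exact Stmt18Aux.sa_inj _ _ _ h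
    have hbeq : bx = by₀ := by
      apply σx.injective
      rw [hσeq] at hi ⊢
      exact Fin.castSucc_injective _ hi
    exact Subtype.ext (show (σx, ax, bx) = (σy, ay, by₀) by rw [hσeq, ha', hbeq])
  · ext τ
    simp only [Set.mem_range, Set.mem_setOf_eq]
    constructor
    · rintro ⟨x, rfl⟩
      rw [Stmt18Aux.pmp_eq_one_iff]
      exact ⟨x.1.2.1.castSucc,
        Stmt18Aux.forward_occ x.1.1 x.1.2.1 x.1.2.2 x.2.2.1 x.2.2.2,
        Stmt18Aux.forward_uniq x.1.1 x.1.2.1 x.1.2.2 x.2.1 x.2.2.1 x.2.2.2⟩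
    · intro h
      rw [Stmt18Aux.pmp_eq_one_iff] at h
      obtain ⟨t0, h0, huniq⟩ := h
      exact Stmt18Aux.reverse τ t0 h0 huniq
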